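/- Let n be a positive integer not divisible by 3. The number of (3,n)-Dyck paths equals Σ_{s=0}^{⌊n/3⌋} (n − 3s). -/

import Mathlib

open MvPolynomial

/-- An `(m,n)`-Dyck path: a north/east lattice path from `(0,0)` to `(m,n)` staying
weakly above the diagonal `y = (n/m)x`.  Such a path is encoded by recording, for each
of the `m` columns (indexed `0,…,m-1` from left to right), the number of cells of that
column lying above the path; this gives an antitone sequence, and the diagonal
condition for the east step in column `i` reads `m * c i ≤ n * (m - 1 - i)`. -/
def DyckPath (m n : ℕ) : Type :=
  {c : Fin m → Fin (n + 1) //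
    (∀ i j : Fin m, i ≤ j → (c j : ℕ) ≤ (c i : ℕ)) ∧
      ∀ i : Fin m, m * (c i : ℕ) ≤ n * (m - 1 - (i : ℕ))}

noncomputable instance instFintypeDyckPath (m n : ℕ) : Fintype (DyckPath m n) := by
  classical
  unfold DyckPath
  infer_instance

namespace DyckPath

variable {m n : ℕ}

/-- `λ(Π)`, the set of cells of the `m × n` lattice lying above the path `Π`.
The cell `(i, j)` (with `i : Fin m`, `j : Fin n`) is the cell in column `i + 1`
(from the left) and row `j + 1` (from the bottom) in the paper's 1-based indexing. -/
def cellsAbove (P : DyckPath m n) : Set (Fin m × Fin n) :=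
  {x | n - (P.1 x.1 : ℕ) ≤ (x.2 : ℕ)}

/-- `arm(x)`: the number of cells of `λ(Π)` strictly east of `x` (in the row of `x`). -/
noncomputable def arm (P : DyckPath m n) (x : Fin m × Fin n) : ℕ :=
  {y ∈ P.cellsAbove | x.1 < y.1 ∧ y.2 = x.2}.ncard

/-- `leg(x)`: the number of cells of `λ(Π)` strictly south of `x` (in the column of `x`). -/
noncomputable def leg (P : DyckPath m n) (x : Fin m × Fin n) : ℕ :=
  {y ∈ P.cellsAbove | y.1 = x.1 ∧ y.2 < x.2}.ncard

end DyckPath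

/-- The dinv condition `arm/(leg+1) < m/n < (arm+1)/leg` for a cell with given arm `a`
and leg `l`, the right inequality being interpreted as true when `l = 0`. -/
def dinvCond (m n a l : ℕ) : Prop :=
  (a : ℚ) / ((l : ℚ) + 1) < (m : ℚ) / (n : ℚ) ∧
    (l = 0 ∨ (m : ℚ) / (n : ℚ) < ((a : ℚ) + 1) / (l : ℚ))

namespace DyckPath

variable {m n : ℕ}

/-- `dinv(Π)`: the number of cells `x ∈ λ(Π)` with
`arm(x)/(leg(x)+1) < m/n < (arm(x)+1)/leg(x)`. -/
noncomputable def dinv (P : DyckPath m n) : ℕ :=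
  {x ∈ P.cellsAbove | dinvCond m n (P.arm x) (P.leg x)}.ncard

/-- `area(Π)`: the number of cells of the lattice lying entirely between the path and
the diagonal, i.e. cells lying entirely weakly above the diagonal `y = (n/m)x` and
below the path. -/
noncomputable def area (P : DyckPath m n) : ℕ :=
  {x : Fin m × Fin n | n * ((x.1 : ℕ) + 1) ≤ m * (x.2 : ℕ) ∧ x ∉ P.cellsAbove}.ncard

end DyckPath

/-- The `(m,n)`-rational `q,t`-Catalan polynomial `C_{m,n}(q,t)`, with `q = X 0` and
`t = X 1`:  `C_{m,n}(q,t) = Σ_Π q^{dinv(Π)} t^{area(Π)}` over all `(m,n)`-Dyck paths. -/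
noncomputable def ratCatalan (m n : ℕ) : MvPolynomial (Fin 2) ℤ :=
  ∑ P : DyckPath m n, X 0 ^ P.dinv * X 1 ^ P.area

/-- The rank of the cell `(i, j)` of the `3 × n` lattice: in the paper's 1-based
coordinates `(a, b) = (i+1, j+1)`, this is `R(a,b) = -a·n + 3(b-1)`. -/
def cellRank (n : ℕ) (x : Fin 3 × Fin n) : ℤ :=
  3 * (x.2 : ℤ) - ((x.1 : ℤ) + 1) * (n : ℤ)

/-- The set of positive ranks of the `3 × n` lattice: these, in increasing order, are
the entries of the rank word. -/
def posRank (n : ℕ) : Set ℤ :=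
  {r | 0 < r ∧ ∃ x : Fin 3 × Fin n, cellRank n x = r}

/-- The set of marked ranks of a `(3,n)`-Dyck path: the ranks of the cells above
the path. -/
def markedRank {n : ℕ} (P : DyckPath 3 n) : Set ℤ :=
  cellRank n '' P.cellsAbove

/-- `skips(Π)`: the number of skips of `Π`, i.e. of maximal blocks of consecutive
unmarked entries of the rank word of `Π` having at least one marked entry to the left
and at least one marked entry to the right.  Each such block is counted through its
rightmost entry `r`: `r` is an unmarked entry, some marked entry lies to its left, and
the next entry of the rank word after `r` is marked. -/
noncomputable def DyckPath.skips {n : ℕ} (P : DyckPath 3 n) : ℕ :=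
  {r : ℤ | r ∈ posRank n ∧ r ∉ markedRank P ∧
    (∃ l ∈ markedRank P, l < r) ∧
    ∃ s ∈ markedRank P, r < s ∧ ∀ t ∈ posRank n, r < t → s ≤ t}.ncard

/-- The number of `(3,n)`-Dyck paths equals
`Σ_{s=0}^{⌊n/3⌋} (n − 3s)`. -/
theorem card_dyckPath_three (n : ℕ) (hn : 0 < n) (h3 : ¬ (3 ∣ n)) :
    Nat.card (DyckPath 3 n) = ∑ s ∈ Finset.range (n / 3 + 1), (n - 3 * s) := by
  classical
  set k := n / 3 with hk
  set M := 2 * n / 3 with hM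
  set T : Finset (ℕ × ℕ) :=
    (Finset.range (k+1)).biUnion (fun b => (Finset.Icc b M).image (fun a => (a, b))) with hT
  have hmem : ∀ p : ℕ × ℕ, p ∈ T ↔ p.2 ≤ p.1 ∧ 3 * p.1 ≤ 2 * n ∧ 3 * p.2 ≤ n := by
    rintro ⟨a, b⟩
    simp only [hT, Finset.mem_biUnion, Finset.mem_image, Finset.mem_Icc, Finset.mem_range,
      Prod.mk.injEq]
    constructor
    · rintro ⟨b', hb', a', ⟨h1, h2⟩, rfl, rfl⟩
      refine ⟨h1, ?_, ?_⟩ <;> omega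
    · rintro ⟨h1, h2, h3⟩
      exact ⟨b, by omega, a, ⟨h1, by omega⟩, rfl, rfl⟩
  have e : DyckPath 3 n ≃ {p : ℕ × ℕ // p ∈ T} :=
    { toFun := fun P => ⟨((P.1 0 : ℕ), (P.1 1 : ℕ)), by
        rw [hmem]
        refine ⟨P.2.1 0 1 (by decide), ?_, ?_⟩
        · have := P.2.2 0; simp at this; omega
        · have := P.2.2 1; simp at this; omega⟩
      invFun := fun p => ⟨![⟨p.1.1, by have := (hmem p.1).1 p.2; omega⟩,
          ⟨p.1.2, by have := (hmem p.1).1 p.2; omega⟩, ⟨0, by omega⟩], by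
        have hp := (hmem p.1).1 p.2
        constructor
        · intro i j hij
          fin_cases i <;> fin_cases j <;>
            simp_all [Fin.le_def] <;> omega
        · intro i
          fin_cases i <;> simp <;> omega⟩
      left_inv := by
        rintro ⟨c, hc1, hc2⟩
        apply Subtype.ext
        funext i
        have h2 := hc2 2
        simp at h2
        fin_cases i <;> (apply Fin.ext; simp) <;> simp [h2]
      right_inv := by
        rintro ⟨⟨a, b⟩, hp⟩
        apply Subtype.ext
        simp }
  have hcard : Nat.card (DyckPath 3 n) = T.card := by
    rw [Nat.card_congr e, Nat.card_eq_finsetCard]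
  rw [hcard]
  have hdisj : ∀ b1 ∈ Finset.range (k+1), ∀ b2 ∈ Finset.range (k+1), b1 ≠ b2 →
      Disjoint ((Finset.Icc b1 M).image (fun a => (a, b1)))
        ((Finset.Icc b2 M).image (fun a => (a, b2))) := by
    intro b1 _ b2 _ hne
    simp only [Finset.disjoint_left, Finset.mem_image, Finset.mem_Icc]
    rintro p ⟨a, -, rfl⟩ ⟨a', -, h⟩
    have hb : b2 = b1 := congrArg Prod.snd h
    exact hne hb.symm
  rw [hT, Finset.card_biUnion hdisj]
  have himg : ∀ b, ((Finset.Icc b M).image (fun a => (a, b))).card = M + 1 - b := by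
    intro b
    rw [Finset.card_image_of_injective _ (fun x y h => congrArg Prod.fst h),
      Nat.card_Icc]
  simp only [himg]
  -- now prove ∑ b in range (k+1), (M + 1 - b) = ∑ s in range (k+1), (n - 3*s)
  have hkM : k ≤ M := by omega
  have hA : (∑ b ∈ Finset.range (k+1), (M + 1 - b)) + (∑ b ∈ Finset.range (k+1), b)
      = (k+1) * (M+1) := by
    rw [← Finset.sum_add_distrib]
    have step : ∀ b ∈ Finset.range (k+1), M + 1 - b + b = M + 1 := by
      intro b hb
      have := Finset.mem_range.1 hb
      omega
    rw [Finset.sum_congr rfl step, Finset.sum_const, Finset.card_range, smul_eq_mul]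
  have hB : (∑ s ∈ Finset.range (k+1), (n - 3 * s)) + 3 * (∑ s ∈ Finset.range (k+1), s)
      = (k+1) * n := by
    rw [Finset.mul_sum, ← Finset.sum_add_distrib]
    have step : ∀ s ∈ Finset.range (k+1), n - 3 * s + 3 * s = n := by
      intro s hs
      have := Finset.mem_range.1 hs
      omega
    rw [Finset.sum_congr rfl step, Finset.sum_const, Finset.card_range, smul_eq_mul]
  have hG : (∑ b ∈ Finset.range (k+1), b) * 2 = (k+1) * k :=
    Finset.sum_range_id_mul_two (k+1)
  have hMn : M + 1 + k = n := by omega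
  have hprod : (k+1) * n = (k+1) * (M+1) + (k+1) * k := by
    rw [← hMn]; ring
  omega
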